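/- Let c < d be real numbers and f ∈ L¹[c,d]. Then ∫_c^d e^{iρ(d−t)} f(t) dt = o(e^{|Im ρ|(d−c)}) as the complex number ρ → ∞, i.e., for every ε > 0 there exists R > 0 such that |ρ| > R implies |∫_c^d e^{iρ(d−t)} f(t) dt| ≤ ε e^{|Im ρ|(d−c)}. -/

import Mathlib

open MeasureTheory Complex

open intervalIntegral in

lemma kernel_bound {c d : ℝ} (ρ : ℂ) {t : ℝ} (h1 : c ≤ t) (h2 : t ≤ d) :
    ‖Complex.exp (Complex.I * ρ * ((d : ℂ) - t))‖ ≤ Real.exp (|ρ.im| * (d - c)) := by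
  rw [Complex.norm_exp]
  apply Real.exp_le_exp.2
  have hre : (Complex.I * ρ * ((d : ℂ) - (t : ℂ))).re = -ρ.im * (d - t) := by
    simp [Complex.mul_re, Complex.mul_im, Complex.sub_re, Complex.sub_im]
  rw [hre]
  have h3 : -ρ.im ≤ |ρ.im| := neg_le_abs _
  nlinarith [abs_nonneg ρ.im]

lemma ibp_bound (c d : ℝ) (hcd : c ≤ d) (ρ : ℂ) (hρ : ρ ≠ 0)
    (v v' : ℝ → ℂ) (hv : ∀ x ∈ Set.uIcc c d, HasDerivAt v (v' x) x)
    (hv'c : Continuous v')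
    {C C' : ℝ} (hC : ∀ t ∈ Set.Icc c d, ‖v t‖ ≤ C) (hC' : ∀ t ∈ Set.Icc c d, ‖v' t‖ ≤ C') :
    ‖∫ t in c..d, Complex.exp (Complex.I * ρ * ((d : ℂ) - t)) * v t‖ ≤
      Real.exp (|ρ.im| * (d - c)) * (2 * C + (d - c) * C') / ‖ρ‖ := by
  set E := Real.exp (|ρ.im| * (d - c)) with hE
  have hIρ : Complex.I * ρ ≠ 0 := mul_ne_zero Complex.I_ne_zero hρ
  set u : ℝ → ℂ := fun t => -(Complex.I * ρ)⁻¹ * Complex.exp (Complex.I * ρ * ((d : ℂ) - t)) with hu_def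
  set u' : ℝ → ℂ := fun t => Complex.exp (Complex.I * ρ * ((d : ℂ) - t)) with hu'_def
  have hvc : ContinuousOn v (Set.uIcc c d) := fun x hx =>
    (hv x hx).continuousAt.continuousWithinAt
  have hKc : Continuous u' := by
    apply Complex.continuous_exp.comp
    continuity
  have huc : Continuous u := by
    apply continuous_const.mul hKc
  have hu : ∀ x ∈ Set.uIcc c d, HasDerivAt u (u' x) x := by
    intro x _
    have h0 : HasDerivAt (fun t : ℝ => ((t : ℂ))) 1 x := by
      simpa using (hasDerivAt_id x).ofReal_comp
    have h1 : HasDerivAt (fun t : ℝ => Complex.I * ρ * ((d : ℂ) - t)) (-(Complex.I * ρ)) x := by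
      simpa using ((h0.const_sub ((d : ℂ))).const_mul (Complex.I * ρ))
    have h2 := h1.cexp.const_mul (-(Complex.I * ρ)⁻¹)
    convert h2 using 1
    · rfl
    have hinv : -(Complex.I * ρ)⁻¹ * -(Complex.I * ρ) = 1 := by
      rw [neg_mul_neg, inv_mul_cancel₀ hIρ]
    rw [hu'_def]
    linear_combination (-(Complex.exp (Complex.I * ρ * ((d : ℂ) - x)))) * hinv
  have hiv : IntervalIntegrable (fun x => u' x * v x) volume c d :=
    (hKc.continuousOn.mul hvc).intervalIntegrable
  have hiuv' : IntervalIntegrable (fun x => u x * v' x) volume c d :=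
    ((huc.mul hv'c).intervalIntegrable c d)
  have key := intervalIntegral.integral_deriv_mul_eq_sub hu hv
    (hKc.intervalIntegrable c d) (hv'c.intervalIntegrable c d)
  rw [intervalIntegral.integral_add hiv hiuv'] at key
  have heq : (∫ t in c..d, u' t * v t) = u d * v d - u c * v c - ∫ t in c..d, u t * v' t := by
    linear_combination key
  have haρ : (0:ℝ) < ‖ρ‖ := by
    exact norm_pos_iff.2 hρ
  have hE1 : (1:ℝ) ≤ E := by
    rw [hE]
    exact Real.one_le_exp (mul_nonneg (abs_nonneg _) (by linarith))
  have hubound : ∀ t ∈ Set.Icc c d, ‖u t‖ ≤ E / ‖ρ‖ := by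
    intro t ht
    have h1 : ‖u t‖ = (‖ρ‖)⁻¹ * ‖Complex.exp (Complex.I * ρ * ((d : ℂ) - t))‖ := by
      simp [hu_def, norm_mul, norm_inv]
    rw [h1]
    have := kernel_bound (c := c) (d := d) ρ ht.1 ht.2
    rw [div_eq_inv_mul]
    exact mul_le_mul_of_nonneg_left this (by positivity)
  have hCnn : 0 ≤ C := le_trans (norm_nonneg _) (hC d ⟨hcd, le_refl d⟩)
  have hC'nn : 0 ≤ C' := le_trans (norm_nonneg _) (hC' d ⟨hcd, le_refl d⟩)
  have hint : ‖∫ t in c..d, u t * v' t‖ ≤ E / ‖ρ‖ * C' * |d - c| := by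
    apply intervalIntegral.norm_integral_le_of_norm_le_const
    intro x hx
    have hx' : x ∈ Set.Icc c d := by
      rw [Set.uIoc_of_le hcd] at hx
      exact ⟨le_of_lt hx.1, hx.2⟩
    rw [norm_mul]
    exact mul_le_mul (hubound x hx') (hC' x hx') (norm_nonneg _) (by positivity)
  have hud := hubound d ⟨hcd, le_refl d⟩
  have huc' := hubound c ⟨le_refl c, hcd⟩
  have hvd := hC d ⟨hcd, le_refl d⟩
  have hvc' := hC c ⟨le_refl c, hcd⟩
  rw [heq]
  have h1 : ‖u d * v d - u c * v c - ∫ t in c..d, u t * v' t‖ ≤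
      ‖u d‖ * ‖v d‖ + ‖u c‖ * ‖v c‖ + ‖∫ t in c..d, u t * v' t‖ := by
    calc ‖u d * v d - u c * v c - ∫ t in c..d, u t * v' t‖
        ≤ ‖u d * v d - u c * v c‖ + ‖∫ t in c..d, u t * v' t‖ := norm_sub_le _ _
      _ ≤ ‖u d * v d‖ + ‖u c * v c‖ + ‖∫ t in c..d, u t * v' t‖ := by
          have := norm_sub_le (u d * v d) (u c * v c); linarith
      _ = ‖u d‖ * ‖v d‖ + ‖u c‖ * ‖v c‖ + ‖∫ t in c..d, u t * v' t‖ := by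
          simp [norm_mul]
  have habs : |d - c| = d - c := abs_of_nonneg (by linarith)
  rw [habs] at hint
  have hEρ : 0 ≤ E / ‖ρ‖ := by positivity
  have h2 : ‖u d‖ * ‖v d‖ ≤ E / ‖ρ‖ * C :=
    mul_le_mul hud hvd (norm_nonneg _) hEρ
  have h3 : ‖u c‖ * ‖v c‖ ≤ E / ‖ρ‖ * C :=
    mul_le_mul huc' hvc' (norm_nonneg _) hEρ
  have hfin : E * (2 * C + (d - c) * C') / ‖ρ‖ =
      E / ‖ρ‖ * C + E / ‖ρ‖ * C + E / ‖ρ‖ * C' * (d - c) := by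
    field_simp
    ring
  rw [hfin]
  linarith

theorem riemann_lebesgue_right (c d : ℝ) (hcd : c < d) (f : ℝ → ℂ)
    (hf : IntervalIntegrable f volume c d) :
    ∀ ε > 0, ∃ R > 0, ∀ ρ : ℂ, R < ‖ρ‖ →
      ‖∫ t in c..d, Complex.exp (Complex.I * ρ * ((d : ℂ) - t)) * f t‖
        ≤ ε * Real.exp (|ρ.im| * (d - c)) := by
  intro ε hε
  have hdc : (0:ℝ) < d - c := by linarith
  -- Step 1: continuous compactly supported approximation in L¹
  set F : ℝ → ℂ := (Set.Ioc c d).indicator f with hF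
  have hFi : Integrable F volume := (hf.1).integrable_indicator measurableSet_Ioc
  obtain ⟨g, hgsupp, hgL1, hgc, hgi⟩ :=
    hFi.exists_hasCompactSupport_integral_sub_le (show (0:ℝ) < ε/3 by linarith)
  -- Step 2: polynomial approximation of g
  set δ : ℝ := ε / (6 * (d - c)) with hδ
  have hδpos : 0 < δ := by positivity
  obtain ⟨p₁, hp₁⟩ := exists_polynomial_near_of_continuousOn c d (fun t => (g t).re)
    (Complex.continuous_re.comp hgc).continuousOn δ hδpos
  obtain ⟨p₂, hp₂⟩ := exists_polynomial_near_of_continuousOn c d (fun t => (g t).im)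
    (Complex.continuous_im.comp hgc).continuousOn δ hδpos
  set h : ℝ → ℂ := fun t => ((p₁.eval t : ℝ) : ℂ) + ((p₂.eval t : ℝ) : ℂ) * Complex.I with hh
  set h' : ℝ → ℂ := fun t => ((p₁.derivative.eval t : ℝ) : ℂ) +
    ((p₂.derivative.eval t : ℝ) : ℂ) * Complex.I with hh'
  have hhc : Continuous h := by
    apply Continuous.add
    · exact Complex.continuous_ofReal.comp p₁.continuous
    · exact (Complex.continuous_ofReal.comp p₂.continuous).mul continuous_const
  have hh'c : Continuous h' := by
    apply Continuous.add
    · exact Complex.continuous_ofReal.comp p₁.derivative.continuous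
    · exact (Complex.continuous_ofReal.comp p₂.derivative.continuous).mul continuous_const
  have hder : ∀ x ∈ Set.uIcc c d, HasDerivAt h (h' x) x := by
    intro x _
    exact ((p₁.hasDerivAt x).ofReal_comp).add
      (((p₂.hasDerivAt x).ofReal_comp).mul_const Complex.I)
  -- bounds for h, h'
  obtain ⟨C, hC⟩ := (isCompact_Icc (a := c) (b := d)).exists_bound_of_continuousOn
    hhc.continuousOn
  obtain ⟨C', hC'⟩ := (isCompact_Icc (a := c) (b := d)).exists_bound_of_continuousOn
    hh'c.continuousOn
  have hCnn : 0 ≤ C := le_trans (norm_nonneg _) (hC d ⟨le_of_lt hcd, le_refl d⟩)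
  have hC'nn : 0 ≤ C' := le_trans (norm_nonneg _) (hC' d ⟨le_of_lt hcd, le_refl d⟩)
  set B : ℝ := 2 * C + (d - c) * C' with hB
  have hBnn : 0 ≤ B := by positivity
  refine ⟨max 1 (3 * B / ε), lt_of_lt_of_le one_pos (le_max_left _ _), ?_⟩
  intro ρ hρR
  have haρ : (0:ℝ) < ‖ρ‖ := lt_trans (lt_of_lt_of_le one_pos (le_max_left _ _)) hρR
  have hρ : ρ ≠ 0 := by
    intro h0; rw [h0] at haρ; simp at haρ
  set E : ℝ := Real.exp (|ρ.im| * (d - c)) with hE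
  have hEpos : 0 < E := Real.exp_pos _
  set K : ℝ → ℂ := fun t => Complex.exp (Complex.I * ρ * ((d : ℂ) - t)) with hK
  have hKc : Continuous K := by
    apply Complex.continuous_exp.comp; continuity
  -- integrabilities
  have hi1 : IntervalIntegrable (fun t => K t * (f t - g t)) volume c d :=
    (hf.sub (hgc.intervalIntegrable c d)).continuousOn_mul hKc.continuousOn
  have hi2 : IntervalIntegrable (fun t => K t * (g t - h t)) volume c d :=
    ((hKc.mul (hgc.sub hhc)).intervalIntegrable c d)
  have hi3 : IntervalIntegrable (fun t => K t * h t) volume c d :=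
    ((hKc.mul hhc).intervalIntegrable c d)
  -- split
  have hsplit : (∫ t in c..d, K t * f t) =
      (∫ t in c..d, K t * (f t - g t)) + (∫ t in c..d, K t * (g t - h t)) +
        (∫ t in c..d, K t * h t) := by
    rw [← intervalIntegral.integral_add hi1 hi2, ← intervalIntegral.integral_add (hi1.add hi2) hi3]
    apply intervalIntegral.integral_congr
    intro t _
    ring
  -- Term 1
  have hfg : IntervalIntegrable (fun t => f t - g t) volume c d :=
    hf.sub (hgc.intervalIntegrable c d)
  have hT1 : ‖∫ t in c..d, K t * (f t - g t)‖ ≤ E * (ε / 3) := by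
    have step1 : ‖∫ t in c..d, K t * (f t - g t)‖ ≤
        ∫ t in Set.Ioc c d, ‖K t * (f t - g t)‖ := by
      have := intervalIntegral.norm_integral_le_integral_norm_uIoc
        (a := c) (b := d) (f := fun t => K t * (f t - g t)) (μ := volume)
      rwa [Set.uIoc_of_le (le_of_lt hcd)] at this
    have step2 : (∫ t in Set.Ioc c d, ‖K t * (f t - g t)‖) ≤
        ∫ t in Set.Ioc c d, E * ‖f t - g t‖ := by
      apply setIntegral_mono_on
      · have := intervalIntegrable_iff.1 hi1.norm
        rwa [Set.uIoc_of_le (le_of_lt hcd)] at this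
      · have := intervalIntegrable_iff.1 ((hfg.norm).const_mul E)
        rwa [Set.uIoc_of_le (le_of_lt hcd)] at this
      · exact measurableSet_Ioc
      · intro t ht
        rw [norm_mul]
        exact mul_le_mul_of_nonneg_right (kernel_bound ρ (le_of_lt ht.1) ht.2) (norm_nonneg _)
    have step3 : (∫ t in Set.Ioc c d, E * ‖f t - g t‖) = E * ∫ t in Set.Ioc c d, ‖f t - g t‖ :=
      MeasureTheory.integral_const_mul E _
    have step4 : (∫ t in Set.Ioc c d, ‖f t - g t‖) = ∫ t in Set.Ioc c d, ‖F t - g t‖ := by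
      apply setIntegral_congr_fun measurableSet_Ioc
      intro x hx
      simp only [hF, Set.indicator_of_mem hx]
    have step5 : (∫ t in Set.Ioc c d, ‖F t - g t‖) ≤ ∫ t, ‖F t - g t‖ :=
      setIntegral_le_integral (hFi.sub hgi).norm (Filter.Eventually.of_forall fun x => norm_nonneg _)
    have : (∫ t in Set.Ioc c d, ‖f t - g t‖) ≤ ε / 3 := by
      rw [step4]; exact le_trans step5 hgL1
    calc ‖∫ t in c..d, K t * (f t - g t)‖
        ≤ ∫ t in Set.Ioc c d, ‖K t * (f t - g t)‖ := step1
      _ ≤ ∫ t in Set.Ioc c d, E * ‖f t - g t‖ := step2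
      _ = E * ∫ t in Set.Ioc c d, ‖f t - g t‖ := step3
      _ ≤ E * (ε / 3) := mul_le_mul_of_nonneg_left this (le_of_lt hEpos)
  -- Term 2
  have hT2 : ‖∫ t in c..d, K t * (g t - h t)‖ ≤ E * (ε / 3) := by
    have key : ‖∫ t in c..d, K t * (g t - h t)‖ ≤ E * (2 * δ) * |d - c| := by
      apply intervalIntegral.norm_integral_le_of_norm_le_const
      intro x hx
      have hx' : x ∈ Set.Icc c d := by
        rw [Set.uIoc_of_le (le_of_lt hcd)] at hx
        exact ⟨le_of_lt hx.1, hx.2⟩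
      rw [norm_mul]
      have hgh : ‖g x - h x‖ ≤ 2 * δ := by
        have hre : (g x - h x).re = (g x).re - p₁.eval x := by simp [hh]
        have him : (g x - h x).im = (g x).im - p₂.eval x := by simp [hh]
        have := Complex.norm_le_abs_re_add_abs_im (g x - h x)
        rw [hre, him] at this
        have h1 := hp₁ x hx'
        have h2 := hp₂ x hx'
        rw [abs_sub_comm] at h1 h2
        calc ‖g x - h x‖ ≤ |(g x).re - p₁.eval x| + |(g x).im - p₂.eval x| := this
          _ ≤ δ + δ := add_le_add (le_of_lt h1) (le_of_lt h2)
          _ = 2 * δ := by ring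
      exact mul_le_mul (kernel_bound ρ hx'.1 hx'.2) hgh (norm_nonneg _) (le_of_lt hEpos)
    rw [abs_of_pos hdc] at key
    calc ‖∫ t in c..d, K t * (g t - h t)‖ ≤ E * (2 * δ) * (d - c) := key
      _ = E * (ε / 3) := by rw [hδ]; field_simp; ring
  -- Term 3
  have hT3 : ‖∫ t in c..d, K t * h t‖ ≤ E * (ε / 3) := by
    have key := ibp_bound c d (le_of_lt hcd) ρ hρ h h' hder hh'c hC hC'
    have hRle : 3 * B / ε < ‖ρ‖ := lt_of_le_of_lt (le_max_right 1 _) hρR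
    have hBρ : B / ‖ρ‖ ≤ ε / 3 := by
      rw [div_le_div_iff₀ haρ (by norm_num : (0:ℝ) < 3)]
      nlinarith [(div_lt_iff₀ hε).1 hRle]
    calc ‖∫ t in c..d, K t * h t‖ ≤ E * B / ‖ρ‖ := key
      _ = E * (B / ‖ρ‖) := by rw [mul_div_assoc]
      _ ≤ E * (ε / 3) := mul_le_mul_of_nonneg_left hBρ (le_of_lt hEpos)
  have hshow : (∫ t in c..d, Complex.exp (Complex.I * ρ * ((d : ℂ) - t)) * f t) =
      ∫ t in c..d, K t * f t := rfl
  rw [hshow, hsplit]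
  calc ‖(∫ t in c..d, K t * (f t - g t)) + (∫ t in c..d, K t * (g t - h t)) +
        (∫ t in c..d, K t * h t)‖
      ≤ ‖(∫ t in c..d, K t * (f t - g t)) + (∫ t in c..d, K t * (g t - h t))‖ +
        ‖∫ t in c..d, K t * h t‖ := norm_add_le _ _
    _ ≤ ‖∫ t in c..d, K t * (f t - g t)‖ + ‖∫ t in c..d, K t * (g t - h t)‖ +
        ‖∫ t in c..d, K t * h t‖ := by
        have := norm_add_le (∫ t in c..d, K t * (f t - g t)) (∫ t in c..d, K t * (g t - h t))
        linarith
    _ ≤ E * (ε / 3) + E * (ε / 3) + E * (ε / 3) := by linarith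
    _ = ε * E := by ring
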